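/- Let X be a finite nonempty set, let γ : X² → {0,1} be symmetric, let f : X² → ℝ be symmetric with |f(x,y)| ≤ γ(x,y) for all x, y ∈ X, let k ≥ 1 be an integer, let p > 0, and let 0 < z ≤ 1. Define T₀ = T₁ = 0 and, for 2 ≤ m ≤ 2k, T_m := (pz)^{2k−m} · Σ_J E[⟨f, zγ⟩_{P_m}^J], where P_m is the path with vertices 1,…,m+1 and edges {i,i+1}, and the sum runs over all J ⊆ E(P_m) with |J| even that contain both the edge {1,2} and the edge {m,m+1}. Then for every ℓ with 1 ≤ ℓ ≤ k, T_{2ℓ} + 2·T_{2ℓ−1} + T_{2ℓ−2} ≥ 0. -/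

import Mathlib

open Finset

/-- `E[⟨f₁,f₂⟩_{P_m}^J]` for the path `P_m` with vertices `1,…,m+1` and edges `{i,i+1}`:
the expectation, over independent uniform random `x : Fin (m+1) → X`, of the product of
`f₁` over the edges indexed by `J` and of `f₂` over the remaining edges. -/
noncomputable def pathMoment {X : Type} [Fintype X] (m : ℕ) (J : Finset (Fin m))
    (f₁ f₂ : X → X → ℝ) : ℝ :=
  (∑ x : Fin (m + 1) → X, ∏ i : Fin m,
      (if i ∈ J then f₁ (x i.castSucc) (x i.succ) else f₂ (x i.castSucc) (x i.succ))) /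
    (Fintype.card X : ℝ) ^ (m + 1)

open Finset

section Aux

variable {X : Type} [Fintype X]

noncomputable def kApp (h : X → X → ℝ) (v : X → ℝ) : X → ℝ :=
  fun a => ∑ b, h a b * v b

noncomputable def kIter (h : X → X → ℝ) : ℕ → (X → ℝ) → (X → ℝ)
  | 0, v => v
  | (e+1), v => kApp h (kIter h e v)

noncomputable def kDot (u v : X → ℝ) : ℝ := ∑ a, u a * v a

lemma kDot_nonneg_self (u : X → ℝ) : 0 ≤ kDot u u :=
  Finset.sum_nonneg fun a _ => mul_self_nonneg _

lemma kApp_move (h : X → X → ℝ) (hs : ∀ a b, h a b = h b a) (u w : X → ℝ) :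
    kDot (kApp h u) w = kDot u (kApp h w) := by
  unfold kDot kApp
  simp only [Finset.sum_mul, Finset.mul_sum]
  rw [Finset.sum_comm]
  refine Finset.sum_congr rfl fun x _ => Finset.sum_congr rfl fun y _ => ?_
  rw [hs y x]; ring

lemma kDot_iter (h : X → X → ℝ) (hs : ∀ a b, h a b = h b a) (v : X → ℝ) (a b : ℕ) :
    kDot (kIter h a v) (kIter h b v) = kDot v (kIter h (a + b) v) := by
  induction a generalizing b with
  | zero => rw [Nat.zero_add]; rfl
  | succ n ih =>
      have h1 : kDot (kIter h (n+1) v) (kIter h b v) = kDot (kIter h n v) (kIter h (b+1) v) := by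
        show kDot (kApp h (kIter h n v)) (kIter h b v) = _
        rw [kApp_move h hs]
        rfl
      have h2 : n + (b + 1) = n + 1 + b := by omega
      rw [h1, ih (b+1), h2]

lemma kDot_comm (u v : X → ℝ) : kDot u v = kDot v u := by
  unfold kDot
  exact Finset.sum_congr rfl fun x _ => mul_comm _ _

lemma key_pos (h : X → X → ℝ) (hs : ∀ a b, h a b = h b a) (v : X → ℝ) (c : ℝ) (hc : 0 ≤ c)
    (e : ℕ) :
    0 ≤ kDot v (kIter h (2*e+2) v) + 2 * c * kDot v (kIter h (2*e+1) v)
      + c^2 * kDot v (kIter h (2*e) v) := by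
  have expand : ∀ u u' : X → ℝ, kDot (fun x => u x + c * u' x) (fun x => u x + c * u' x)
      = kDot u u + c * kDot u u' + c * kDot u' u + c^2 * kDot u' u' := by
    intro u u'
    unfold kDot
    simp only [Finset.mul_sum, ← Finset.sum_add_distrib]
    refine Finset.sum_congr rfl fun x _ => ?_
    ring
  have n1 : e + 1 + (e + 1) = 2*e+2 := by omega
  have n2 : e + 1 + e = 2*e+1 := by omega
  have n3 : e + e = 2*e := by omega
  have e1 : kDot (kIter h (e+1) v) (kIter h (e+1) v) = kDot v (kIter h (2*e+2) v) := by
    rw [kDot_iter h hs, n1]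
  have e2 : kDot (kIter h (e+1) v) (kIter h e v) = kDot v (kIter h (2*e+1) v) := by
    rw [kDot_iter h hs, n2]
  have e3 : kDot (kIter h e v) (kIter h e v) = kDot v (kIter h (2*e) v) := by
    rw [kDot_iter h hs, n3]
  have := kDot_nonneg_self (fun x => kIter h (e+1) v x + c * kIter h e v x)
  rw [expand, kDot_comm (kIter h e v) (kIter h (e+1) v), e1, e2, e3] at this
  linarith

end Aux

section Path

variable {X : Type} [Fintype X]

noncomputable def pathVec : (m : ℕ) → (Fin m → X → X → ℝ) → X → ℝ
  | 0, _ => fun _ => 1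
  | (m+1), K => fun a => ∑ b, K 0 a b * pathVec m (fun i => K i.succ) b

lemma pi_split (m : ℕ) (F : (Fin (m+1) → X) → ℝ) :
    ∑ y : Fin (m+1) → X, F y = ∑ b : X, ∑ y' : Fin m → X, F (Fin.cons b y') := by
  rw [← Equiv.sum_comp (Fin.consEquiv (fun _ : Fin (m+1) => X)) F]
  rw [Fintype.sum_prod_type]
  rfl

lemma pathVec_eq_sum (m : ℕ) (K : Fin m → X → X → ℝ) (a : X) :
    pathVec m K a = ∑ y : Fin m → X, ∏ i : Fin m, K i ((Fin.cons a y : Fin (m+1) → X) i.castSucc) (y i) := by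
  induction m generalizing a with
  | zero =>
      simp [pathVec]
  | succ n ih =>
      show (∑ b, K 0 a b * pathVec n (fun i => K i.succ) b) = _
      rw [pi_split n (fun y => ∏ i : Fin (n+1), K i ((Fin.cons a y : Fin (n+2) → X) i.castSucc) (y i))]
      refine Finset.sum_congr rfl fun b _ => ?_
      rw [ih (fun i => K i.succ) b, Finset.mul_sum]
      refine Finset.sum_congr rfl fun y _ => ?_
      simp only [Fin.prod_univ_succ, Fin.castSucc_zero, Fin.cons_zero, Fin.cons_succ,
        ← Fin.succ_castSucc]

lemma sum_prod_path (m : ℕ) (K : Fin m → X → X → ℝ) :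
    (∑ x : Fin (m+1) → X, ∏ i : Fin m, K i (x i.castSucc) (x i.succ))
      = ∑ a, pathVec m K a := by
  rw [pi_split m (fun x => ∏ i : Fin m, K i (x i.castSucc) (x i.succ))]
  refine Finset.sum_congr rfl fun a _ => ?_
  rw [pathVec_eq_sum]
  refine Finset.sum_congr rfl fun y _ => Finset.prod_congr rfl fun i _ => ?_
  simp [Fin.cons_succ]

end Path

section Kend

variable {X : Type} [Fintype X]

/-- kernel: `h` everywhere except `f` at last edge -/
noncomputable def Lker (f h : X → X → ℝ) (e : ℕ) : Fin (e+1) → X → X → ℝ :=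
  fun i => if (i : ℕ) = e then f else h

/-- kernel: `f` at first and last edge, `h` in the middle -/
noncomputable def Kend (f h : X → X → ℝ) (e : ℕ) : Fin (e+2) → X → X → ℝ :=
  fun i => if (i : ℕ) = 0 ∨ (i : ℕ) = e + 1 then f else h

lemma pathVec_Lker (f h : X → X → ℝ) (e : ℕ) :
    pathVec (e+1) (Lker f h e) = kIter h e (fun a => ∑ b, f a b) := by
  induction e with
  | zero =>
      funext a
      show (∑ b, Lker f h 0 0 a b * pathVec 0 _ b) = _
      simp [Lker, pathVec, kIter]
  | succ n ih =>
      funext a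
      show (∑ b, Lker f h (n+1) 0 a b * pathVec (n+1) (fun i => Lker f h (n+1) i.succ) b) = _
      have h0 : Lker f h (n+1) 0 = h := by
        simp [Lker]
      have hshift : (fun i : Fin (n+1) => Lker f h (n+1) i.succ) = Lker f h n := by
        funext i
        simp only [Lker, Fin.val_succ]
        by_cases hc : (i : ℕ) = n
        · simp [hc]
        · rw [if_neg (by omega), if_neg hc]
      rw [h0, hshift, ih]
      rfl

lemma pathVec_Kend (f h : X → X → ℝ) (e : ℕ) :
    pathVec (e+2) (Kend f h e) = kApp f (kIter h e (fun a => ∑ b, f a b)) := by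
  funext a
  show (∑ b, Kend f h e 0 a b * pathVec (e+1) (fun i => Kend f h e i.succ) b) = _
  have h0 : Kend f h e 0 = f := by simp [Kend]
  have hshift : (fun i : Fin (e+1) => Kend f h e i.succ) = Lker f h e := by
    funext i
    simp only [Kend, Lker, Fin.val_succ]
    by_cases hc : (i : ℕ) = e
    · simp [hc]
    · rw [if_neg (by omega), if_neg hc]
  rw [h0, hshift, pathVec_Lker]
  rfl

lemma sum_Kend (f h : X → X → ℝ) (hf : ∀ a b, f a b = f b a) (e : ℕ) :
    (∑ x : Fin (e+3) → X, ∏ i : Fin (e+2), Kend f h e i (x i.castSucc) (x i.succ))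
      = kDot (fun a => ∑ b, f a b) (kIter h e (fun a => ∑ b, f a b)) := by
  rw [sum_prod_path, pathVec_Kend]
  unfold kApp kDot
  rw [Finset.sum_comm]
  refine Finset.sum_congr rfl fun b _ => ?_
  rw [← Finset.sum_mul]
  congr 1
  exact Finset.sum_congr rfl fun c _ => hf c b

end Kend

section Comb

lemma sum_even_filter {m : ℕ} (i0 i1 : Fin m) (h01 : i0 ≠ i1) (a b : Fin m → ℝ) :
    ∑ J ∈ (Finset.univ : Finset (Finset (Fin m))).filter
        (fun J => Even J.card ∧ i0 ∈ J ∧ i1 ∈ J),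
      ∏ i, (if i ∈ J then a i else b i)
    = (∏ i, (if i = i0 ∨ i = i1 then a i else a i + b i)
      + ∏ i, (if i = i0 ∨ i = i1 then a i else b i - a i)) / 2 := by
  classical
  set s : Finset (Fin m) := Finset.univ.filter (fun i => ¬(i = i0 ∨ i = i1)) with hs
  -- split the two products
  have hsplit : ∀ c : Fin m → ℝ,
      (∏ i, (if i = i0 ∨ i = i1 then a i else c i)) = a i0 * a i1 * ∏ i ∈ s, c i := by
    intro c
    rw [← Finset.prod_filter_mul_prod_filter_not Finset.univ (fun i => i = i0 ∨ i = i1)]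
    congr 1
    · have hset : Finset.univ.filter (fun i : Fin m => i = i0 ∨ i = i1) = {i0, i1} := by
        ext i; simp [Finset.mem_filter, Finset.mem_insert]
      rw [hset, Finset.prod_pair h01]
      rw [if_pos (Or.inl rfl), if_pos (Or.inr rfl)]
    · exact Finset.prod_congr rfl fun i hi => by
        rw [if_neg (by simpa [hs] using hi)]
  rw [hsplit, hsplit]
  -- expand the products over s
  have hA : (∏ i ∈ s, (a i + b i)) = ∑ t ∈ s.powerset, (∏ i ∈ t, a i) * ∏ i ∈ s \ t, b i :=
    Finset.prod_add a b s
  have hB : (∏ i ∈ s, (b i - a i))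
      = ∑ t ∈ s.powerset, (-1 : ℝ) ^ t.card * ((∏ i ∈ t, a i) * ∏ i ∈ s \ t, b i) := by
    have : (∏ i ∈ s, (b i - a i)) = ∏ i ∈ s, ((-a i) + b i) := by
      refine Finset.prod_congr rfl fun i _ => by ring
    rw [this, Finset.prod_add (fun i => -a i) b s]
    refine Finset.sum_congr rfl fun t _ => ?_
    have : (∏ i ∈ t, (-a i)) = (-1 : ℝ) ^ t.card * ∏ i ∈ t, a i := by
      rw [show (fun i => -a i) = (fun i => (-1 : ℝ) * a i) by funext i; ring]
      rw [Finset.prod_mul_distrib, Finset.prod_const]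
    rw [this]; ring
  have hAB : (∏ i ∈ s, (a i + b i)) + (∏ i ∈ s, (b i - a i))
      = 2 * ∑ t ∈ s.powerset.filter (fun t => Even t.card),
          (∏ i ∈ t, a i) * ∏ i ∈ s \ t, b i := by
    rw [hA, hB, ← Finset.sum_add_distrib, Finset.mul_sum, Finset.sum_filter]
    refine Finset.sum_congr rfl fun t _ => ?_
    by_cases ht : Even t.card
    · rw [if_pos ht, Even.neg_one_pow ht]; ring
    · rw [if_neg ht, Odd.neg_one_pow (Nat.not_even_iff_odd.mp ht)]; ring
  -- bijection
  have hbij : ∑ J ∈ (Finset.univ : Finset (Finset (Fin m))).filter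
        (fun J => Even J.card ∧ i0 ∈ J ∧ i1 ∈ J),
      ∏ i, (if i ∈ J then a i else b i)
      = ∑ t ∈ s.powerset.filter (fun t => Even t.card),
          a i0 * a i1 * ((∏ i ∈ t, a i) * ∏ i ∈ s \ t, b i) := by
    refine Finset.sum_bij' (fun J _ => J \ {i0, i1}) (fun t _ => insert i0 (insert i1 t))
      ?_ ?_ ?_ ?_ ?_
    · intro J hJ
      simp only [Finset.mem_filter, Finset.mem_univ, true_and] at hJ
      obtain ⟨hev, h0, h1⟩ := hJ
      simp only [Finset.mem_filter, Finset.mem_powerset]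
      constructor
      · intro i hi
        simp only [Finset.mem_sdiff, Finset.mem_insert, Finset.mem_singleton] at hi
        simp [hs, Finset.mem_filter]
        tauto
      · have hsub : ({i0, i1} : Finset (Fin m)) ⊆ J := by
          intro i hi
          simp only [Finset.mem_insert, Finset.mem_singleton] at hi
          rcases hi with rfl | rfl <;> assumption
        have hcard : (J \ {i0, i1}).card = J.card - 2 := by
          rw [Finset.card_sdiff_of_subset hsub, Finset.card_pair h01]
        have h2 : 2 ≤ J.card := by
          calc 2 = ({i0, i1} : Finset (Fin m)).card := (Finset.card_pair h01).symm
          _ ≤ J.card := Finset.card_le_card hsub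
        rw [hcard, Nat.even_sub h2]
        simpa using hev
    · intro t ht
      simp only [Finset.mem_filter, Finset.mem_powerset] at ht
      obtain ⟨hts, htev⟩ := ht
      have h0t : i0 ∉ t := fun hc => by simpa [hs] using hts hc
      have h1t : i1 ∉ t := fun hc => by simpa [hs] using hts hc
      simp only [Finset.mem_filter, Finset.mem_univ, true_and]
      refine ⟨?_, by simp, by simp⟩
      rw [Finset.card_insert_of_notMem (by simp [h01, h0t]),
        Finset.card_insert_of_notMem h1t, Nat.even_iff]
      rw [Nat.even_iff] at htev
      omega
    · intro J hJ
      simp only [Finset.mem_filter, Finset.mem_univ, true_and] at hJ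
      obtain ⟨_, h0, h1⟩ := hJ
      ext i
      simp only [Finset.mem_insert, Finset.mem_sdiff, Finset.mem_singleton]
      constructor
      · rintro (rfl | rfl | ⟨hi, _⟩) <;> tauto
      · intro hi
        by_cases hi0 : i = i0
        · tauto
        · by_cases hi1 : i = i1 <;> tauto
    · intro t ht
      simp only [Finset.mem_filter, Finset.mem_powerset] at ht
      obtain ⟨hts, _⟩ := ht
      have h0t : i0 ∉ t := fun hc => by simpa [hs] using hts hc
      have h1t : i1 ∉ t := fun hc => by simpa [hs] using hts hc
      ext i
      simp only [Finset.mem_sdiff, Finset.mem_insert, Finset.mem_singleton]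
      constructor
      · rintro ⟨rfl | rfl | hi, h⟩ <;> tauto
      · intro hi
        refine ⟨by tauto, ?_⟩
        rintro (rfl | rfl) <;> [exact h0t hi; exact h1t hi]
    · intro J hJ
      simp only [Finset.mem_filter, Finset.mem_univ, true_and] at hJ
      obtain ⟨_, h0, h1⟩ := hJ
      rw [← Finset.prod_filter_mul_prod_filter_not Finset.univ (fun i => i = i0 ∨ i = i1)]
      have hset : Finset.univ.filter (fun i : Fin m => i = i0 ∨ i = i1) = {i0, i1} := by
        ext i; simp [Finset.mem_filter, Finset.mem_insert]
      rw [hset, Finset.prod_pair h01, if_pos h0, if_pos h1]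
      have hmid : (∏ i ∈ Finset.univ.filter (fun i : Fin m => ¬(i = i0 ∨ i = i1)),
          (if i ∈ J then a i else b i))
          = (∏ i ∈ J \ {i0, i1}, a i) * ∏ i ∈ s \ (J \ {i0, i1}), b i := by
        rw [← Finset.prod_filter_mul_prod_filter_not s (fun i => i ∈ J)]
        congr 1
        · rw [Finset.prod_congr rfl (fun i hi => if_pos (Finset.mem_filter.mp hi).2)]
          congr 1
          ext i
          simp only [Finset.mem_filter, hs, Finset.mem_univ, true_and, Finset.mem_sdiff,
            Finset.mem_insert, Finset.mem_singleton]
          tauto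
        · rw [Finset.prod_congr rfl (fun i hi => if_neg (Finset.mem_filter.mp hi).2)]
          congr 1
          ext i
          simp only [Finset.mem_filter, hs, Finset.mem_univ, true_and, Finset.mem_sdiff,
            Finset.mem_insert, Finset.mem_singleton]
          tauto
      rw [hmid]
  rw [hbij]
  rw [show (a i0 * a i1 * ∏ i ∈ s, (a i + b i) + a i0 * a i1 * ∏ i ∈ s, (b i - a i))
      = a i0 * a i1 * ((∏ i ∈ s, (a i + b i)) + ∏ i ∈ s, (b i - a i)) from by ring, hAB]
  rw [Finset.mul_sum, Finset.mul_sum, Finset.sum_div]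
  refine Finset.sum_congr rfl fun t _ => ?_
  ring
end Comb

section Assemble

variable {X : Type} [Fintype X]

lemma sum_pathMoment (f g : X → X → ℝ) (hf : ∀ a b, f a b = f b a) (e : ℕ) :
    ∑ J ∈ (Finset.univ : Finset (Finset (Fin (e+2)))).filter
        (fun J => Even J.card ∧ (⟨0, by omega⟩ : Fin (e+2)) ∈ J
          ∧ (⟨e+2-1, by omega⟩ : Fin (e+2)) ∈ J),
      pathMoment (e+2) J f g
    = (kDot (fun a => ∑ b, f a b) (kIter (fun a b => f a b + g a b) e (fun a => ∑ b, f a b))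
      + kDot (fun a => ∑ b, f a b) (kIter (fun a b => g a b - f a b) e (fun a => ∑ b, f a b)))
      / (2 * (Fintype.card X : ℝ) ^ (e+3)) := by
  have i0 : Fin (e+2) := ⟨0, by omega⟩
  have hne : (⟨0, by omega⟩ : Fin (e+2)) ≠ (⟨e+1, by omega⟩ : Fin (e+2)) := by
    simp [Fin.ext_iff]
  unfold pathMoment
  rw [← Finset.sum_div]
  rw [Finset.sum_comm]
  have per_x : ∀ x : Fin (e+3) → X,
      (∑ J ∈ (Finset.univ : Finset (Finset (Fin (e+2)))).filter
          (fun J => Even J.card ∧ (⟨0, by omega⟩ : Fin (e+2)) ∈ J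
            ∧ (⟨e+2-1, by omega⟩ : Fin (e+2)) ∈ J),
        ∏ i : Fin (e+2),
          (if i ∈ J then f (x i.castSucc) (x i.succ) else g (x i.castSucc) (x i.succ)))
      = ((∏ i : Fin (e+2), Kend f (fun a b => f a b + g a b) e i (x i.castSucc) (x i.succ))
        + ∏ i : Fin (e+2), Kend f (fun a b => g a b - f a b) e i (x i.castSucc) (x i.succ))
        / 2 := by
    intro x
    have base := sum_even_filter (⟨0, by omega⟩ : Fin (e+2)) (⟨e+1, by omega⟩) hne
      (fun i => f (x i.castSucc) (x i.succ)) (fun i => g (x i.castSucc) (x i.succ))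
    have hiff : ∀ i : Fin (e+2),
        (i = (⟨0, by omega⟩ : Fin (e+2)) ∨ i = (⟨e+1, by omega⟩ : Fin (e+2)))
          ↔ ((i : ℕ) = 0 ∨ (i : ℕ) = e + 1) := by
      intro i; rw [Fin.ext_iff, Fin.ext_iff]
    have p1 : (∏ i : Fin (e+2),
        (if i = (⟨0, by omega⟩ : Fin (e+2)) ∨ i = (⟨e+1, by omega⟩ : Fin (e+2))
          then f (x i.castSucc) (x i.succ)
          else f (x i.castSucc) (x i.succ) + g (x i.castSucc) (x i.succ)))
        = ∏ i : Fin (e+2), Kend f (fun a b => f a b + g a b) e i (x i.castSucc) (x i.succ) := by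
      refine Finset.prod_congr rfl fun i _ => ?_
      unfold Kend
      by_cases hc : (i : ℕ) = 0 ∨ (i : ℕ) = e + 1
      · rw [if_pos ((hiff i).mpr hc), if_pos hc]
      · rw [if_neg (fun hcc => hc ((hiff i).mp hcc)), if_neg hc]
    have p2 : (∏ i : Fin (e+2),
        (if i = (⟨0, by omega⟩ : Fin (e+2)) ∨ i = (⟨e+1, by omega⟩ : Fin (e+2))
          then f (x i.castSucc) (x i.succ)
          else g (x i.castSucc) (x i.succ) - f (x i.castSucc) (x i.succ)))
        = ∏ i : Fin (e+2), Kend f (fun a b => g a b - f a b) e i (x i.castSucc) (x i.succ) := by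
      refine Finset.prod_congr rfl fun i _ => ?_
      unfold Kend
      by_cases hc : (i : ℕ) = 0 ∨ (i : ℕ) = e + 1
      · rw [if_pos ((hiff i).mpr hc), if_pos hc]
      · rw [if_neg (fun hcc => hc ((hiff i).mp hcc)), if_neg hc]
    rw [← p1, ← p2]
    exact base
  calc (∑ x : Fin (e+3) → X,
      ∑ J ∈ (Finset.univ : Finset (Finset (Fin (e+2)))).filter
          (fun J => Even J.card ∧ (⟨0, by omega⟩ : Fin (e+2)) ∈ J
            ∧ (⟨e+2-1, by omega⟩ : Fin (e+2)) ∈ J),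
        ∏ i : Fin (e+2),
          (if i ∈ J then f (x i.castSucc) (x i.succ) else g (x i.castSucc) (x i.succ)))
      / (Fintype.card X : ℝ) ^ (e+3)
    = (∑ x : Fin (e+3) → X,
        ((∏ i : Fin (e+2), Kend f (fun a b => f a b + g a b) e i (x i.castSucc) (x i.succ))
        + ∏ i : Fin (e+2), Kend f (fun a b => g a b - f a b) e i (x i.castSucc) (x i.succ)) / 2)
      / (Fintype.card X : ℝ) ^ (e+3) := by
        rw [Finset.sum_congr rfl fun x _ => per_x x]
    _ = (kDot (fun a => ∑ b, f a b)
          (kIter (fun a b => f a b + g a b) e (fun a => ∑ b, f a b))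
        + kDot (fun a => ∑ b, f a b)
          (kIter (fun a b => g a b - f a b) e (fun a => ∑ b, f a b)))
        / (2 * (Fintype.card X : ℝ) ^ (e+3)) := by
        rw [← Finset.sum_div, Finset.sum_add_distrib,
          sum_Kend f (fun a b => f a b + g a b) hf e,
          sum_Kend f (fun a b => g a b - f a b) hf e,
          div_div]

end Assemble

/-- The claim inside the proof of Lemma 3.4: `T_{2ℓ} + 2T_{2ℓ-1} + T_{2ℓ-2} ≥ 0`. -/
theorem T_triple_sum_nonneg (X : Type) [Fintype X] [Nonempty X] (γ f : X → X → ℝ)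
    (hγs : ∀ a b, γ a b = γ b a) (hγ01 : ∀ a b, γ a b = 0 ∨ γ a b = 1)
    (hfs : ∀ a b, f a b = f b a) (hfγ : ∀ a b, |f a b| ≤ γ a b)
    (k : ℕ) (hk : 1 ≤ k) (p z : ℝ) (hp : 0 < p) (hz0 : 0 < z) (hz1 : z ≤ 1)
    (T : ℕ → ℝ) (hT0 : T 0 = 0) (hT1 : T 1 = 0)
    (hTm : ∀ m, ∀ _ : 2 ≤ m, ∀ _ : m ≤ 2 * k,
      T m = (p * z) ^ (2 * k - m) *
        ∑ J ∈ (Finset.univ : Finset (Finset (Fin m))).filter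
            (fun J => Even J.card ∧ (⟨0, by omega⟩ : Fin m) ∈ J ∧ (⟨m - 1, by omega⟩ : Fin m) ∈ J),
          pathMoment m J f (fun a b => z * γ a b)) :
    ∀ ℓ, 1 ≤ ℓ → ℓ ≤ k → 0 ≤ T (2 * ℓ) + 2 * T (2 * ℓ - 1) + T (2 * ℓ - 2) := by
  intro l hl1 hlk
  have hc : 0 ≤ p * z := le_of_lt (mul_pos hp hz0)
  have hN : (0:ℝ) < (Fintype.card X : ℝ) := by exact_mod_cast Fintype.card_pos
  set v : X → ℝ := fun a => ∑ b, f a b with hv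
  set A : X → X → ℝ := fun a b => f a b + z * γ a b with hA
  set B : X → X → ℝ := fun a b => z * γ a b - f a b with hB
  have hAs : ∀ a b, A a b = A b a := fun a b => by simp [hA, hfs a b, hγs a b]
  have hBs : ∀ a b, B a b = B b a := fun a b => by simp [hB, hfs a b, hγs a b]
  have hQ : ∀ e : ℕ, e + 2 ≤ 2*k → T (e+2) = (p*z)^(2*k-(e+2)) *
      ((kDot v (kIter A e v) + kDot v (kIter B e v))
        / (2*(Fintype.card X:ℝ)^(e+3))) := by
    intro e he
    rw [hTm (e+2) (by omega) he]
    congr 1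
    exact sum_pathMoment f (fun a b => z * γ a b) hfs e
  rcases Nat.lt_or_ge l 2 with h2 | h2
  · have hl : l = 1 := by omega
    subst hl
    norm_num [hT0, hT1]
    have hq := hQ 0 (by omega)
    norm_num at hq
    rw [hq]
    refine mul_nonneg (pow_nonneg hc _) (div_nonneg ?_ (by positivity))
    exact add_nonneg (kDot_nonneg_self v) (kDot_nonneg_self v)
  · obtain ⟨e, rfl⟩ : ∃ e, l = e + 2 := ⟨l - 2, by omega⟩
    have hm1 : 2*(e+2) = (2*e+2)+2 := by omega
    have hm2 : 2*(e+2)-1 = (2*e+1)+2 := by omega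
    have hm3 : 2*(e+2)-2 = (2*e)+2 := by omega
    rw [hm3, hm2, hm1]
    rw [hQ (2*e+2) (by omega), hQ (2*e+1) (by omega), hQ (2*e) (by omega)]
    set N := (Fintype.card X : ℝ) with hNdef
    set c := p * z with hcdef
    have hj1 : 2*k - (2*e+1+2) = (2*k - (2*e+2+2)) + 1 := by omega
    have hj2 : 2*k - (2*e+2) = (2*k - (2*e+2+2)) + 2 := by omega
    rw [hj1, hj2]
    set j := 2*k - (2*e+2+2) with hjdef
    have expand : ∀ x2 x1 x0 : ℝ,
        c^j * (x2/(2*N^(2*e+2+3))) + 2*(c^(j+1)*(x1/(2*N^(2*e+1+3))))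
          + c^(j+2)*(x0/(2*N^(2*e+3)))
        = (c^j/(2*N^(2*e+2+3))) * (x2 + 2*(c*N)*x1 + (c*N)^2*x0) := by
      intro x2 x1 x0
      have hN0 : N ≠ 0 := ne_of_gt hN
      field_simp
      ring
    rw [expand]
    refine mul_nonneg (div_nonneg (pow_nonneg hc _) (by positivity)) ?_
    have kA := key_pos A hAs v (c*N) (mul_nonneg hc hN.le) e
    have kB := key_pos B hBs v (c*N) (mul_nonneg hc hN.le) e
    nlinarith [kA, kB]
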